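/- Let d ≥ 1, let A ⊆ ℤ^d be finite, and suppose v_1, …, v_{d+1} ∈ A are affinely independent over ℝ and A is contained in the convex hull of {v_1, …, v_{d+1}}. If x ∈ C_A is a minimal element of C_A, i.e. x − ṽ_i ∉ C_A for every i = 1, …, d+1, then the height of x is at most D − 1. -/

import Mathlib

open Pointwise
open Matrix

/-- The lift of `v ∈ ℤ^d` to height 1 in `ℤ^(d+1)`. -/
def liftZ {d : ℕ} (v : Fin d → ℤ) : Fin (d + 1) → ℤ := Fin.snoc v 1

/-- The cone over `A`: all `ℕ`-linear combinations of lifts of elements of `A`. -/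
def coneOver {d : ℕ} (A : Set (Fin d → ℤ)) : Set (Fin (d + 1) → ℤ) :=
  (AddSubmonoid.closure (liftZ '' A) : AddSubmonoid (Fin (d + 1) → ℤ))

lemma index_eq_natAbs_det {n : ℕ} (M : Matrix (Fin n) (Fin n) ℤ) (hdet : M.det ≠ 0) :
    (LinearMap.range (Matrix.toLin' M)).toAddSubgroup.index = M.det.natAbs := by
  classical
  have hinj : Function.Injective (Matrix.toLin' M) := by
    rw [← LinearMap.ker_eq_bot, Matrix.ker_toLin'_eq_bot_iff]
    intro y hy
    have h1 : M.adjugate *ᵥ (M *ᵥ y) = M.det • y := by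
      rw [Matrix.mulVec_mulVec, Matrix.adjugate_mul, Matrix.smul_mulVec,
        Matrix.one_mulVec]
    rw [hy, Matrix.mulVec_zero] at h1
    rcases smul_eq_zero.mp h1.symm with h | h
    · exact absurd h hdet
    · exact h
  set L := LinearMap.range (Matrix.toLin' M) with hL
  obtain ⟨m, snf⟩ := L.smithNormalForm (Pi.basisFun ℤ (Fin n))
  have e1 : (Fin n → ℤ) ≃ₗ[ℤ] L := LinearEquiv.ofInjective _ hinj
  have hm : m = n := by
    have h1 : Module.finrank ℤ L = m := by
      rw [Module.finrank_eq_card_basis snf.bN, Fintype.card_fin]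
    have h2 : Module.finrank ℤ L = n := by
      rw [← e1.finrank_eq]
      simp [Module.finrank_pi]
    omega
  subst hm
  have hidx : L.toAddSubgroup.index = ∏ i : Fin m, (snf.a i).natAbs := by
    rw [snf.toAddSubgroup_index_eq_ite]
    simp only [Fintype.card_fin, if_true, if_pos rfl]
    exact Finset.prod_congr rfl fun i _ => by
      rw [Ideal.span_singleton_toAddSubgroup_eq_zmultiples, Int.index_zmultiples]
  let e1' : (Fin m → ℤ) ≃ₗ[ℤ] L := LinearEquiv.ofInjective _ hinj
  let e2 : (Fin m → ℤ) ≃ₗ[ℤ] L := snf.bM.equiv snf.bN (Equiv.refl _)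
  have hassoc : Associated (LinearMap.det ((L.subtype) ∘ₗ (e1' : (Fin m → ℤ) →ₗ[ℤ] L)))
      (LinearMap.det ((L.subtype) ∘ₗ (e2 : (Fin m → ℤ) →ₗ[ℤ] L))) :=
    LinearMap.associated_det_comp_equiv _ _ _
  have hdet1 : LinearMap.det ((L.subtype) ∘ₗ (e1' : (Fin m → ℤ) →ₗ[ℤ] L)) = M.det := by
    have h : (L.subtype) ∘ₗ (e1' : (Fin m → ℤ) →ₗ[ℤ] L) = Matrix.toLin' M := by
      refine LinearMap.ext fun y => ?_
      rfl
    rw [h, LinearMap.det_toLin']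
  have hbij : Function.Bijective snf.f := (Finite.injective_iff_bijective).mp snf.f.injective
  let σ : Equiv.Perm (Fin m) := Equiv.ofBijective snf.f hbij
  have hdet2 : (LinearMap.det ((L.subtype) ∘ₗ (e2 : (Fin m → ℤ) →ₗ[ℤ] L))).natAbs
      = (∏ i : Fin m, snf.a i).natAbs := by
    rw [← LinearMap.det_toMatrix snf.bM]
    have hmat : LinearMap.toMatrix snf.bM snf.bM ((L.subtype) ∘ₗ (e2 : (Fin m → ℤ) →ₗ[ℤ] L))
        = (σ⁻¹.permMatrix ℤ) * Matrix.diagonal snf.a := by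
      ext i j
      rw [LinearMap.toMatrix_apply, Matrix.mul_diagonal]
      have h : (L.subtype) ((e2 : (Fin m → ℤ) →ₗ[ℤ] L) (snf.bM j)) = (snf.bN j : Fin m → ℤ) := by
        simp [e2, Module.Basis.equiv_apply]
      show snf.bM.repr ((L.subtype) ((e2 : (Fin m → ℤ) →ₗ[ℤ] L) (snf.bM j))) i = _
      rw [h, snf.snf j, _root_.map_smul, Module.Basis.repr_self]
      simp only [Equiv.Perm.permMatrix, PEquiv.toMatrix_apply, Equiv.toPEquiv_apply,
        Option.mem_def, Option.some.injEq, Finsupp.smul_single, smul_eq_mul, mul_one,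
        Finsupp.single_apply]
      have hσ : σ⁻¹ i = j ↔ snf.f j = i := by
        rw [Equiv.Perm.inv_eq_iff_eq]
        exact ⟨fun h' => h'.symm, fun h' => h'.symm⟩
      by_cases hc : snf.f j = i
      · rw [if_pos hc, if_pos (hσ.mpr hc), one_mul]
      · rw [if_neg hc, if_neg (fun hh => hc (hσ.mp hh)), zero_mul]
    rw [hmat, Matrix.det_mul, Matrix.det_permutation, Matrix.det_diagonal, Int.natAbs_mul]
    rcases Int.units_eq_one_or (Equiv.Perm.sign σ⁻¹) with h | h <;> rw [h] <;> simp
  rw [hidx]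
  calc ∏ i : Fin m, (snf.a i).natAbs = (∏ i : Fin m, snf.a i).natAbs :=
        (map_prod Int.natAbsHom _ _).symm
    _ = (LinearMap.det ((L.subtype) ∘ₗ (e2 : (Fin m → ℤ) →ₗ[ℤ] L))).natAbs := hdet2.symm
    _ = (LinearMap.det ((L.subtype) ∘ₗ (e1' : (Fin m → ℤ) →ₗ[ℤ] L))).natAbs :=
        (Int.natAbs_eq_iff_associated.mpr hassoc).symm
    _ = M.det.natAbs := by rw [hdet1]

lemma exists_list_sum {M : Type*} [AddCommMonoid M] {S : Set M} {x : M}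
    (hx : x ∈ AddSubmonoid.closure S) :
    ∃ l : List M, (∀ z ∈ l, z ∈ S) ∧ l.sum = x := by
  induction hx using AddSubmonoid.closure_induction with
  | mem z hz => exact ⟨[z], by simpa using hz, by simp⟩
  | zero => exact ⟨[], by simp, rfl⟩
  | add a b _ _ iha ihb =>
      obtain ⟨la, hla, rfl⟩ := iha
      obtain ⟨lb, hlb, rfl⟩ := ihb
      exact ⟨la ++ lb, by
        intro z hz; rcases List.mem_append.mp hz with h|h
        exacts [hla z h, hlb z h], by simp⟩

lemma sum_last_eq_length {d : ℕ} {A : Set (Fin d → ℤ)} (l : List (Fin (d+1) → ℤ))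
    (hl : ∀ z ∈ l, z ∈ liftZ '' A) : l.sum (Fin.last d) = l.length := by
  induction l with
  | nil => simp
  | cons z t ih =>
      have hz : z (Fin.last d) = 1 := by
        obtain ⟨a, _, rfl⟩ := hl z List.mem_cons_self
        simp [liftZ]
      have ht := ih (fun w hw => hl w (List.mem_cons_of_mem _ hw))
      simp [List.sum_cons, hz, ht, add_comm]

theorem minimal_element_height_bound (d : ℕ) (hd : 1 ≤ d) (A : Set (Fin d → ℤ))
    (hfin : A.Finite)
    (v : Fin (d + 1) → Fin d → ℤ) (hvA : ∀ i, v i ∈ A)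
    (haff : AffineIndependent ℝ (fun i (j : Fin d) => (v i j : ℝ)))
    (hhull : ∀ a ∈ A, (fun j => (a j : ℝ)) ∈
      convexHull ℝ (Set.range (fun i (j : Fin d) => (v i j : ℝ))))
    (D : ℕ) (hD : (D : ℤ) = |(Matrix.of fun r c => liftZ (v c) r).det|)
    (x : Fin (d + 1) → ℤ) (hx : x ∈ coneOver A)
    (hmin : ∀ i : Fin (d + 1), x - liftZ (v i) ∉ coneOver A) :
    x (Fin.last d) ≤ (D : ℤ) - 1 := by
  classical
  set Mz : Matrix (Fin (d+1)) (Fin (d+1)) ℤ := Matrix.of fun r c => liftZ (v c) r with hMz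
  set Mr : Matrix (Fin (d+1)) (Fin (d+1)) ℝ := Mz.map (Int.cast) with hMr
  -- determinant over ℝ is nonzero
  have hdetR : Mr.det ≠ 0 := by
    intro h0
    obtain ⟨c, hc0, hc⟩ := (Matrix.exists_mulVec_eq_zero_iff).mpr h0
    have hsum : ∑ i, c i = 0 := by
      have := congrFun hc (Fin.last d)
      simpa [Matrix.mulVec, dotProduct, Mr, Mz, liftZ] using this
    have hcomb : ∑ i, c i • (fun j => (v i j : ℝ)) = 0 := by
      funext j
      have := congrFun hc (Fin.castSucc j)
      simpa [Matrix.mulVec, dotProduct, Mr, Mz, liftZ, Finset.sum_apply, mul_comm] using this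
    have := affineIndependent_iff.mp haff Finset.univ c (by simpa using hsum)
      (by simpa using hcomb)
    exact hc0 (funext fun i => this i (Finset.mem_univ i))
  have hcast : ((Mz.det : ℤ) : ℝ) = Mr.det := by
    have := RingHom.map_det (Int.castRingHom ℝ) Mz
    simpa [hMr] using this
  have hdetZ : Mz.det ≠ 0 := by
    intro h0
    apply hdetR
    rw [← hcast, h0]; simp
  have hMrUnit : IsUnit Mr.det := isUnit_iff_ne_zero.mpr hdetR
  set γ : (Fin (d+1) → ℤ) → (Fin (d+1) → ℝ) := fun y => Mr⁻¹ *ᵥ (fun r => (y r : ℝ)) with hγ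
  have hMrγ : ∀ y : Fin (d+1) → ℤ, Mr *ᵥ γ y = fun r => (y r : ℝ) := by
    intro y
    rw [hγ, Matrix.mulVec_mulVec, Matrix.mul_nonsing_inv _ hMrUnit, Matrix.one_mulVec]
  have hlastrow : ∀ i, Mr (Fin.last d) i = 1 := by intro i; simp [hMr, hMz, liftZ]
  have hsum_last : ∀ y : Fin (d+1) → ℤ, ∑ i, γ y i = (y (Fin.last d) : ℝ) := by
    intro y
    have := congrFun (hMrγ y) (Fin.last d)
    simpa [Matrix.mulVec, dotProduct, hlastrow] using this
  have hγmul : ∀ w : Fin (d+1) → ℤ, γ (Mz *ᵥ w) = fun i => (w i : ℝ) := by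
    intro w
    have hcastw : (fun r => (((Mz *ᵥ w) r : ℤ) : ℝ)) = Mr *ᵥ (fun i => ((w i : ℤ) : ℝ)) := by
      funext r
      simp only [Matrix.mulVec, dotProduct, hMr, Matrix.map_apply]
      push_cast
      rfl
    rw [hγ]
    simp only [hcastw]
    rw [Matrix.mulVec_mulVec, Matrix.nonsing_inv_mul _ hMrUnit, Matrix.one_mulVec]
  have hpos : ∀ y ∈ AddSubmonoid.closure (liftZ '' A), ∀ i, 0 ≤ γ y i := by
    intro y hy
    induction hy using AddSubmonoid.closure_induction with
    | mem z hz =>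
        obtain ⟨a, ha, rfl⟩ := hz
        have h := hhull a ha
        rw [convexHull_range_eq_exists_affineCombination] at h
        obtain ⟨s, w, hw0, hw1, hwx⟩ := h
        set t : Fin (d+1) → ℝ := fun i => if i ∈ s then w i else 0 with ht
        have ht0 : ∀ i, 0 ≤ t i := fun i => by
          by_cases hi : i ∈ s <;> simp [ht, hi]
          exact hw0 i hi
        have ht1 : ∑ i, t i = 1 := by
          rw [ht]
          simp only [Finset.sum_ite_mem, Finset.univ_inter]
          exact hw1
        have hcombo : ∑ i, t i • (fun j => ((v i j : ℤ) : ℝ)) = fun j => ((a j : ℤ) : ℝ) := by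
          rw [← hwx, Finset.affineCombination_eq_linear_combination s _ w hw1, ht]
          simp only [ite_smul, zero_smul, Finset.sum_ite_mem, Finset.univ_inter]
        have hMrt : Mr *ᵥ t = fun r => (((liftZ a) r : ℤ) : ℝ) := by
          funext r
          induction r using Fin.lastCases with
          | last =>
              simp only [Matrix.mulVec, dotProduct, hlastrow, one_mul]
              simp [liftZ, ht1]
          | cast j =>
              have hrow : ∀ i, Mr (Fin.castSucc j) i = ((v i j : ℤ) : ℝ) := by
                intro i; simp [hMr, hMz, liftZ]
              have := congrFun hcombo j
              simp only [Finset.sum_apply, Pi.smul_apply, smul_eq_mul] at this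
              simp only [Matrix.mulVec, dotProduct, hrow]
              simp only [liftZ, Fin.snoc_castSucc]
              rw [← this]
              exact Finset.sum_congr rfl fun i _ => mul_comm _ _
        intro i
        have hgt : γ (liftZ a) = t := by
          rw [hγ]
          simp only [← hMrt]
          rw [Matrix.mulVec_mulVec, Matrix.nonsing_inv_mul _ hMrUnit, Matrix.one_mulVec]
        rw [hgt]
        exact ht0 i
    | zero =>
        intro i
        have : γ 0 = 0 := by
          rw [hγ]
          have : (fun r => (((0 : Fin (d+1) → ℤ) r : ℤ) : ℝ)) = (0 : Fin (d+1) → ℝ) := by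
            funext r; simp
          simp only [this, Matrix.mulVec_zero]
        rw [this]; rfl
    | add a b _ _ iha ihb =>
        intro i
        have hab : γ (a + b) = γ a + γ b := by
          rw [hγ]
          have : (fun r => (((a + b) r : ℤ) : ℝ))
              = (fun r => ((a r : ℤ) : ℝ)) + (fun r => ((b r : ℤ) : ℝ)) := by
            funext r; simp
          simp only [this, Matrix.mulVec_add]
        rw [hab]
        exact add_nonneg (iha i) (ihb i)
  have hS : ∀ i : Fin (d+1), liftZ (v i) ∈ liftZ '' A := fun i => ⟨v i, hvA i, rfl⟩
  have hconemem : ∀ w : Fin (d+1) → ℤ, (∀ i, 0 ≤ w i) →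
      Mz *ᵥ w ∈ AddSubmonoid.closure (liftZ '' A) := by
    intro w hw
    have hrepr : Mz *ᵥ w = ∑ i, w i • liftZ (v i) := by
      funext r
      simp only [Matrix.mulVec, dotProduct, Finset.sum_apply, Pi.smul_apply,
        smul_eq_mul, hMz]
      exact Finset.sum_congr rfl fun i _ => mul_comm _ _
    rw [hrepr]
    refine AddSubmonoid.sum_mem _ fun i _ => ?_
    have h1 : w i • liftZ (v i) = (w i).toNat • liftZ (v i) := by
      conv_lhs => rw [← Int.toNat_of_nonneg (hw i)]
      exact natCast_zsmul _ _
    rw [h1]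
    have h2 : liftZ (v i) ∈ AddSubmonoid.closure (liftZ '' A) :=
      AddSubmonoid.subset_closure (hS i)
    exact AddSubmonoid.nsmul_mem _ h2 _
  have hxmem : x ∈ AddSubmonoid.closure (liftZ '' A) := hx
  obtain ⟨l, hlS, hlsum⟩ := exists_list_sum hxmem
  by_contra hcon
  push_neg at hcon
  have hxlast : x (Fin.last d) = (l.length : ℤ) := by
    rw [← hlsum]; exact sum_last_eq_length l hlS
  have hDh : D ≤ l.length := by
    have : (D : ℤ) ≤ (l.length : ℤ) := by omega
    exact_mod_cast this
  set H : AddSubgroup (Fin (d+1) → ℤ) := (LinearMap.range (Matrix.toLin' Mz)).toAddSubgroup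
    with hH
  have hDnat : D = Mz.det.natAbs := by
    have h1 : ((Mz.det.natAbs : ℕ) : ℤ) = (D : ℤ) := by
      rw [hD, Int.abs_eq_natAbs]
    exact_mod_cast h1.symm
  have hidx : H.index = D := by rw [hH, index_eq_natAbs_det Mz hdetZ, hDnat]
  have hQcard : Nat.card ((Fin (d+1) → ℤ) ⧸ H) = D := hidx
  have hDpos : 0 < D := by
    rcases Nat.eq_zero_or_pos D with h | h
    · exfalso; apply hdetZ; rw [h] at hDnat
      exact Int.natAbs_eq_zero.mp hDnat.symm
    · exact h
  haveI hQfin : Finite ((Fin (d+1) → ℤ) ⧸ H) := by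
    apply Nat.finite_of_card_ne_zero
    rw [hQcard]; omega
  letI := Fintype.ofFinite ((Fin (d+1) → ℤ) ⧸ H)
  set sfun : ℕ → (Fin (d+1) → ℤ) := fun k => (l.take k).sum with hsfun
  have hcard : Fintype.card ((Fin (d+1) → ℤ) ⧸ H) < Fintype.card (Fin (D+1)) := by
    rw [Fintype.card_fin, ← Nat.card_eq_fintype_card, hQcard]; omega
  obtain ⟨j', k', hne, heq⟩ := Fintype.exists_ne_map_eq_of_card_lt
      (fun k : Fin (D+1) => (QuotientAddGroup.mk (sfun k.val) : (Fin (d+1) → ℤ) ⧸ H)) hcard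
  have key : ∀ j k : ℕ, j < k → k ≤ D →
      (QuotientAddGroup.mk (sfun j) : (Fin (d+1) → ℤ) ⧸ H) = QuotientAddGroup.mk (sfun k) →
      False := by
    intro j k hjk hkD heqq
    have hmem : -(sfun j) + sfun k ∈ H := QuotientAddGroup.eq.mp heqq
    rw [hH, Submodule.mem_toAddSubgroup, LinearMap.mem_range] at hmem
    obtain ⟨w, hw⟩ := hmem
    have hw' : Mz *ᵥ w = sfun k - sfun j := by
      rw [← Matrix.toLin'_apply, hw, neg_add_eq_sub]
    set mid : List (Fin (d+1) → ℤ) := (l.drop j).take (k - j) with hmid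
    have hmid_sub : ∀ z ∈ mid, z ∈ liftZ '' A := fun z hz =>
      hlS z (List.drop_subset _ _ (List.take_subset _ _ hz))
    have htake : l.take k = l.take j ++ mid := by
      rw [hmid, ← List.take_add]
      congr 1
      omega
    have hmid_sum : sfun k = sfun j + mid.sum := by
      rw [hsfun]; simp only [htake, List.sum_append]
    have hmidcone : mid.sum ∈ AddSubmonoid.closure (liftZ '' A) :=
      AddSubmonoid.list_sum_mem _ fun z hz => AddSubmonoid.subset_closure (hmid_sub z hz)
    have hwmid : Mz *ᵥ w = mid.sum := by
      rw [hw', hmid_sum, add_sub_cancel_left]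
    have hwpos : ∀ i, 0 ≤ w i := by
      intro i
      have h2 := hpos (Mz *ᵥ w) (by rw [hwmid]; exact hmidcone) i
      rw [hγmul w] at h2
      simpa using h2
    have hmidlen : mid.length = k - j := by
      rw [hmid, List.length_take, List.length_drop]
      omega
    have hsumw : ∑ i, w i = ((k - j : ℕ) : ℤ) := by
      have h1 := congrFun hwmid (Fin.last d)
      have h2 : (Mz *ᵥ w) (Fin.last d) = ∑ i, w i := by
        simp only [Matrix.mulVec, dotProduct, hMz]
        refine Finset.sum_congr rfl fun i _ => ?_
        simp [liftZ]
      have h3 : mid.sum (Fin.last d) = (mid.length : ℤ) := sum_last_eq_length mid hmid_sub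
      rw [h2] at h1
      rw [h3, hmidlen] at h1
      exact h1
    have hex : ∃ i0, 1 ≤ w i0 := by
      by_contra hno
      push_neg at hno
      have h4 : ∑ i, w i ≤ 0 := Finset.sum_nonpos fun i _ => by
        have := hno i; omega
      rw [hsumw] at h4
      have h5 : 0 < k - j := Nat.sub_pos_of_lt hjk
      omega
    obtain ⟨i0, hi0⟩ := hex
    set w' : Fin (d+1) → ℤ := Function.update w i0 (w i0 - 1) with hw'def
    have hw'pos : ∀ i, 0 ≤ w' i := by
      intro i
      rw [hw'def, Function.update_apply]
      split
      · omega
      · exact hwpos i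
    have hsplit : w = w' + Pi.single i0 1 := by
      funext i
      by_cases hi : i = i0
      · subst hi
        simp [hw'def]
      · simp [hw'def, Function.update_of_ne hi, Pi.single_eq_of_ne hi]
    have hMzw : Mz *ᵥ w = Mz *ᵥ w' + liftZ (v i0) := by
      rw [hsplit, Matrix.mulVec_add]
      congr 1
      funext r
      rw [Matrix.mulVec_single]
      simp [hMz]
    set tail : List (Fin (d+1) → ℤ) := l.drop k with htail
    have htail_sub : ∀ z ∈ tail, z ∈ liftZ '' A := fun z hz => hlS z (List.drop_subset _ _ hz)
    have hxdecomp : x = sfun k + tail.sum := by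
      rw [← hlsum, hsfun, htail]
      conv_lhs => rw [← List.take_append_drop k l]
      rw [List.sum_append]
    have e2 : Mz *ᵥ w' = mid.sum - liftZ (v i0) := by
      have := hMzw.symm
      rw [hwmid] at this
      rw [eq_sub_iff_add_eq]
      exact this.symm ▸ rfl
    have hfinal : x - liftZ (v i0) = (sfun j + tail.sum) + Mz *ᵥ w' := by
      rw [hxdecomp, hmid_sum, e2]
      abel
    have hmem2 : x - liftZ (v i0) ∈ AddSubmonoid.closure (liftZ '' A) := by
      rw [hfinal]
      refine AddSubmonoid.add_mem _ (AddSubmonoid.add_mem _ ?_ ?_) (hconemem w' hw'pos)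
      · exact AddSubmonoid.list_sum_mem _ fun z hz =>
          AddSubmonoid.subset_closure (hlS z (List.take_subset _ _ hz))
      · exact AddSubmonoid.list_sum_mem _ fun z hz => AddSubmonoid.subset_closure (htail_sub z hz)
    exact hmin i0 hmem2
  rcases lt_or_gt_of_ne hne with hlt | hgt
  · exact key j'.val k'.val hlt (by omega) heq
  · exact key k'.val j'.val hgt (by omega) heq.symm
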